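/- For any finite MDP and atomic propositions q, r, the set of states satisfying ⟨Positive⟩(q W r) equals the union of the set of states satisfying ⟨Positive⟩(q U r) and the set of states satisfying ⟨Positive⟩(q U ⟨Almost⟩(□ q)). -/

import Mathlib

open Classical

structure MDP (S A : Type) [Fintype S] where
  isP1 : S → Prop
  Av : S → Finset A
  avNe : ∀ s, isP1 s → (Av s).Nonempty
  δ1 : S → A → S
  δP : S → S → ℝ
  δP_nonneg : ∀ s t, 0 ≤ δP s t
  δP_sum : ∀ s, ¬ isP1 s → ∑ t, δP s t = 1

variable {S A : Type} [Fintype S]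

structure Strat (M : MDP S A) where
  act : S → List S → A
  mem : ∀ s h, act s h ∈ M.Av s

noncomputable def nextD (M : MDP S A) (σ : Strat M) (h : List S) (s t : S) : ℝ :=
  if M.isP1 s then (if t = M.δ1 s (σ.act s h) then 1 else 0) else M.δP s t

noncomputable def prU (M : MDP S A) (q r : S → Prop) (σ : Strat M) :
    ℕ → List S → S → ℝ
  | 0, _, s => if r s then 1 else 0
  | n+1, h, s =>
      if r s then 1 else
      if q s then ∑ t, nextD M σ h s t * prU M q r σ n (s :: h) t else 0

noncomputable def prSafe (M : MDP S A) (q : S → Prop) (σ : Strat M) :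
    ℕ → List S → S → ℝ
  | 0, _, s => if q s then 1 else 0
  | n+1, h, s =>
      if q s then ∑ t, nextD M σ h s t * prSafe M q σ n (s :: h) t else 0

/-- Probability that the play from `s` under `σ` satisfies `q U r`. -/
noncomputable def PrUntil (M : MDP S A) (q r : S → Prop) (σ : Strat M) (s : S) : ℝ :=
  ⨆ n, prU M q r σ n [] s

/-- Probability that the play from `s` under `σ` satisfies `□ q`. -/
noncomputable def PrGlob (M : MDP S A) (q : S → Prop) (σ : Strat M) (s : S) : ℝ :=
  ⨅ n, prSafe M q σ n [] s

/-- Probability of the weak until `q W r ≡ (q U r) ∨ □ q`. -/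
noncomputable def PrWeakUntil (M : MDP S A) (q r : S → Prop) (σ : Strat M) (s : S) : ℝ :=
  PrUntil M q r σ s + PrGlob M (fun t => q t ∧ ¬ r t) σ s

/-- `s ⊨ ⟨Positive⟩(q W r)` (weak until `q W r ≡ (q U r) ∨ □ q`). -/
def PositiveWeakUntil (M : MDP S A) (q r : S → Prop) (s : S) : Prop :=
  ∃ σ : Strat M, 0 < PrWeakUntil M q r σ s

/-- `s ⊨ ⟨Positive⟩(q U ψ)` for a state-set target `ψ`. -/
def PositiveUntil (M : MDP S A) (q ψ : S → Prop) (s : S) : Prop :=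
  ∃ σ : Strat M, 0 < PrUntil M q ψ σ s

/-- `s ⊨ ⟨Almost⟩(□ q)`. -/
def AlmostGlob (M : MDP S A) (q : S → Prop) (s : S) : Prop :=
  ∃ σ : Strat M, PrGlob M q σ s = 1

section Basics
variable {S A : Type} [Fintype S] (M : MDP S A)

lemma nextD_nonneg (σ : Strat M) (h : List S) (s t : S) : 0 ≤ nextD M σ h s t := by
  unfold nextD
  split
  · split <;> norm_num
  · exact M.δP_nonneg s t

lemma nextD_sum (σ : Strat M) (h : List S) (s : S) : ∑ t, nextD M σ h s t = 1 := by
  unfold nextD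
  by_cases hP : M.isP1 s
  · simp [hP]
  · simp [hP, M.δP_sum s hP]

variable (q r : S → Prop)

lemma prU_nonneg (σ : Strat M) : ∀ n h s, 0 ≤ prU M q r σ n h s := by
  intro n
  induction n with
  | zero => intro h s; unfold prU; split <;> norm_num
  | succ n ih =>
    intro h s
    unfold prU
    split
    · norm_num
    split
    · exact Finset.sum_nonneg fun t _ =>
        mul_nonneg (nextD_nonneg M σ h s t) (ih (s :: h) t)
    · exact le_rfl

lemma prU_le_one (σ : Strat M) : ∀ n h s, prU M q r σ n h s ≤ 1 := by
  intro n
  induction n with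
  | zero => intro h s; unfold prU; split <;> norm_num
  | succ n ih =>
    intro h s
    unfold prU
    split
    · exact le_rfl
    split
    · calc ∑ t, nextD M σ h s t * prU M q r σ n (s :: h) t
          ≤ ∑ t, nextD M σ h s t * 1 := by
            refine Finset.sum_le_sum fun t _ => ?_
            exact mul_le_mul_of_nonneg_left (ih (s :: h) t) (nextD_nonneg M σ h s t)
        _ = 1 := by simp [nextD_sum M σ h s]
    · norm_num

lemma prU_mono (σ : Strat M) : ∀ n h s, prU M q r σ n h s ≤ prU M q r σ (n+1) h s := by
  intro n
  induction n with
  | zero =>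
    intro h s
    unfold prU
    split
    · norm_num
    · split
      · exact Finset.sum_nonneg fun t _ => mul_nonneg (nextD_nonneg M σ h s t)
          (prU_nonneg M q r σ 0 (s :: h) t)
      · exact le_rfl
  | succ n ih =>
    intro h s
    conv_lhs => rw [prU]
    conv_rhs => rw [prU]
    split
    · exact le_rfl
    split
    · refine Finset.sum_le_sum fun t _ => ?_
      exact mul_le_mul_of_nonneg_left (ih (s :: h) t) (nextD_nonneg M σ h s t)
    · exact le_rfl

end Basics
section Basics2
variable {S A : Type} [Fintype S] (M : MDP S A) (q r : S → Prop)

lemma prSafe_nonneg (σ : Strat M) : ∀ n h s, 0 ≤ prSafe M q σ n h s := by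
  intro n
  induction n with
  | zero => intro h s; unfold prSafe; split <;> norm_num
  | succ n ih =>
    intro h s
    unfold prSafe
    split
    · exact Finset.sum_nonneg fun t _ =>
        mul_nonneg (nextD_nonneg M σ h s t) (ih (s :: h) t)
    · exact le_rfl

lemma prSafe_le_one (σ : Strat M) : ∀ n h s, prSafe M q σ n h s ≤ 1 := by
  intro n
  induction n with
  | zero => intro h s; unfold prSafe; split <;> norm_num
  | succ n ih =>
    intro h s
    unfold prSafe
    split
    · calc ∑ t, nextD M σ h s t * prSafe M q σ n (s :: h) t
          ≤ ∑ t, nextD M σ h s t * 1 := Finset.sum_le_sum fun t _ =>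
            mul_le_mul_of_nonneg_left (ih (s :: h) t) (nextD_nonneg M σ h s t)
        _ = 1 := by simp [nextD_sum M σ h s]
    · norm_num

lemma prSafe_anti (σ : Strat M) : ∀ n h s, prSafe M q σ (n+1) h s ≤ prSafe M q σ n h s := by
  intro n
  induction n with
  | zero =>
    intro h s
    conv_rhs => rw [prSafe]
    rw [prSafe]
    split
    · calc ∑ t, nextD M σ h s t * prSafe M q σ 0 (s :: h) t
          ≤ ∑ t, nextD M σ h s t * 1 := Finset.sum_le_sum fun t _ =>
            mul_le_mul_of_nonneg_left (prSafe_le_one M q σ 0 (s :: h) t)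
              (nextD_nonneg M σ h s t)
        _ = 1 := by simp [nextD_sum M σ h s]
    · exact le_rfl
  | succ n ih =>
    intro h s
    conv_rhs => rw [prSafe]
    rw [prSafe]
    split
    · exact Finset.sum_le_sum fun t _ =>
        mul_le_mul_of_nonneg_left (ih (s :: h) t) (nextD_nonneg M σ h s t)
    · exact le_rfl

lemma prSafe_mono_pred (q₁ q₂ : S → Prop) (hq : ∀ s, q₁ s → q₂ s) (σ : Strat M) :
    ∀ n h s, prSafe M q₁ σ n h s ≤ prSafe M q₂ σ n h s := by
  intro n
  induction n with
  | zero =>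
    intro h s
    unfold prSafe
    by_cases h1 : q₁ s
    · simp [h1, hq s h1]
    · simp only [h1, if_false]
      split <;> norm_num
  | succ n ih =>
    intro h s
    conv_rhs => rw [prSafe]
    rw [prSafe]
    by_cases h1 : q₁ s
    · simp only [h1, hq s h1, if_true]
      exact Finset.sum_le_sum fun t _ =>
        mul_le_mul_of_nonneg_left (ih (s :: h) t) (nextD_nonneg M σ h s t)
    · simp only [h1, if_false]
      split
      · exact Finset.sum_nonneg fun t _ =>
          mul_nonneg (nextD_nonneg M σ h s t) (prSafe_nonneg M q₂ σ n (s :: h) t)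
      · exact le_rfl

-- bounded above/below for ciSup/ciInf
lemma prU_bdd (σ : Strat M) (h : List S) (s : S) :
    BddAbove (Set.range fun n => prU M q r σ n h s) := by
  refine ⟨1, ?_⟩
  rintro x ⟨n, rfl⟩
  exact prU_le_one M q r σ n h s

lemma prSafe_bdd (σ : Strat M) (h : List S) (s : S) :
    BddBelow (Set.range fun n => prSafe M q σ n h s) := by
  refine ⟨0, ?_⟩
  rintro x ⟨n, rfl⟩
  exact prSafe_nonneg M q σ n h s

/-- sup of prU over n, with general history. -/
noncomputable def sU (σ : Strat M) (h : List S) (s : S) : ℝ := ⨆ n, prU M q r σ n h s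
/-- inf of prSafe over n, with general history. -/
noncomputable def sG (σ : Strat M) (h : List S) (s : S) : ℝ := ⨅ n, prSafe M q σ n h s

lemma sU_nonneg (σ : Strat M) (h : List S) (s : S) : 0 ≤ sU M q r σ h s :=
  le_trans (prU_nonneg M q r σ 0 h s) (le_ciSup (prU_bdd M q r σ h s) 0)

lemma prU_le_sU (σ : Strat M) (n : ℕ) (h : List S) (s : S) :
    prU M q r σ n h s ≤ sU M q r σ h s := le_ciSup (prU_bdd M q r σ h s) n

lemma sG_nonneg (σ : Strat M) (h : List S) (s : S) : 0 ≤ sG M q σ h s :=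
  le_ciInf fun n => prSafe_nonneg M q σ n h s

lemma sG_le_prSafe (σ : Strat M) (n : ℕ) (h : List S) (s : S) :
    sG M q σ h s ≤ prSafe M q σ n h s := ciInf_le (prSafe_bdd M q σ h s) n

lemma sU_pos_iff (σ : Strat M) (h : List S) (s : S) :
    0 < sU M q r σ h s ↔ ∃ n, 0 < prU M q r σ n h s := by
  constructor
  · intro hpos
    by_contra hc
    push_neg at hc
    have : sU M q r σ h s ≤ 0 := ciSup_le fun n => hc n
    linarith
  · rintro ⟨n, hn⟩
    exact lt_of_lt_of_le hn (prU_le_sU M q r σ n h s)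

lemma tendsto_prU (σ : Strat M) (h : List S) (s : S) :
    Filter.Tendsto (fun n => prU M q r σ n h s) Filter.atTop (nhds (sU M q r σ h s)) :=
  tendsto_atTop_ciSup (monotone_nat_of_le_succ fun n => prU_mono M q r σ n h s)
    (prU_bdd M q r σ h s)

lemma tendsto_prSafe (σ : Strat M) (h : List S) (s : S) :
    Filter.Tendsto (fun n => prSafe M q σ n h s) Filter.atTop (nhds (sG M q σ h s)) :=
  tendsto_atTop_ciInf (antitone_nat_of_succ_le fun n => prSafe_anti M q σ n h s)
    (prSafe_bdd M q σ h s)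

end Basics2
section RunEq
variable {S A : Type} [Fintype S] (M : MDP S A)

lemma runEquiv_prU (σ1 σ2 : Strat M) (h0 : List S) (Inv : List S → S → Prop)
    (Hclosed : ∀ h s, Inv h s → ∀ t, Inv (s :: h) t)
    (Hact : ∀ h s, Inv h s → σ1.act s (h ++ h0) = σ2.act s h)
    (q' r' : S → Prop) :
    ∀ n h s, Inv h s → prU M q' r' σ1 n (h ++ h0) s = prU M q' r' σ2 n h s := by
  intro n
  induction n with
  | zero => intro h s _; rfl
  | succ n ih =>
    intro h s hInv
    rw [prU, prU]
    have hact := Hact h s hInv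
    have hnd : ∀ t, nextD M σ1 (h ++ h0) s t = nextD M σ2 h s t := by
      intro t; unfold nextD; rw [hact]
    refine congrArg (if r' s then 1 else ·) ?_
    refine congrArg (if q' s then · else 0) ?_
    refine Finset.sum_congr rfl fun t _ => ?_
    rw [hnd t, show s :: (h ++ h0) = (s :: h) ++ h0 from rfl,
      ih (s :: h) t (Hclosed h s hInv t)]

lemma runEquiv_prSafe (σ1 σ2 : Strat M) (h0 : List S) (Inv : List S → S → Prop)
    (Hclosed : ∀ h s, Inv h s → ∀ t, Inv (s :: h) t)
    (Hact : ∀ h s, Inv h s → σ1.act s (h ++ h0) = σ2.act s h)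
    (q' : S → Prop) :
    ∀ n h s, Inv h s → prSafe M q' σ1 n (h ++ h0) s = prSafe M q' σ2 n h s := by
  intro n
  induction n with
  | zero => intro h s _; rfl
  | succ n ih =>
    intro h s hInv
    rw [prSafe, prSafe]
    have hact := Hact h s hInv
    have hnd : ∀ t, nextD M σ1 (h ++ h0) s t = nextD M σ2 h s t := by
      intro t; unfold nextD; rw [hact]
    refine congrArg (if q' s then · else 0) ?_
    refine Finset.sum_congr rfl fun t _ => ?_
    rw [hnd t, show s :: (h ++ h0) = (s :: h) ++ h0 from rfl,
      ih (s :: h) t (Hclosed h s hInv t)]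

/-- key pointwise inequality: P(q U r) + P(□(q∧¬r)) ≥ P(□ q), step-indexed. -/
lemma prSafe_le_prU_add (q r : S → Prop) (σ : Strat M) :
    ∀ n h s, prSafe M q σ n h s ≤
      prU M q r σ n h s + prSafe M (fun t => q t ∧ ¬ r t) σ n h s := by
  intro n
  induction n with
  | zero =>
    intro h s
    rw [prU, prSafe, prSafe]
    by_cases hr : r s
    · simp only [hr, if_true, not_true, and_false, if_false, add_zero]
      split <;> norm_num
    · by_cases hq : q s <;> simp [hr, hq]
  | succ n ih =>
    intro h s
    rw [prU, prSafe, prSafe]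
    by_cases hr : r s
    · simp only [hr, if_true, not_true, and_false, if_false, add_zero]
      have h1 : (if q s then ∑ t, nextD M σ h s t * prSafe M q σ n (s :: h) t else 0) ≤ 1 := by
        split
        · calc ∑ t, nextD M σ h s t * prSafe M q σ n (s :: h) t
              ≤ ∑ t, nextD M σ h s t * 1 := Finset.sum_le_sum fun t _ =>
                mul_le_mul_of_nonneg_left (prSafe_le_one M q σ n (s :: h) t)
                  (nextD_nonneg M σ h s t)
            _ = 1 := by simp [nextD_sum M σ h s]
        · norm_num
      exact h1
    · by_cases hq : q s
      · simp only [hr, hq, if_true, if_false, not_false_iff, and_true, true_and]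
        rw [← Finset.sum_add_distrib]
        refine Finset.sum_le_sum fun t _ => ?_
        rw [← mul_add]
        exact mul_le_mul_of_nonneg_left (ih (s :: h) t) (nextD_nonneg M σ h s t)
      · simp [hr, hq]

end RunEq
section WLem
variable {S A : Type} [Fintype S] (M : MDP S A) (q r : S → Prop)

/-- history-indexed weak-until value. -/
noncomputable def W (σ : Strat M) (h : List S) (s : S) : ℝ :=
  sU M q r σ h s + sG M (fun t => q t ∧ ¬ r t) σ h s

lemma W_nonneg (σ : Strat M) (h : List S) (s : S) : 0 ≤ W M q r σ h s :=
  add_nonneg (sU_nonneg M q r σ h s) (sG_nonneg M _ σ h s)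

lemma PrWeakUntil_eq_W (σ : Strat M) (s : S) :
    PrWeakUntil M q r σ s = W M q r σ [] s := rfl

lemma sG_le_W (σ : Strat M) (h : List S) (s : S) :
    sG M q σ h s ≤ W M q r σ h s := by
  have key : ∀ n, sG M q σ h s - sU M q r σ h s ≤
      prSafe M (fun t => q t ∧ ¬ r t) σ n h s := by
    intro n
    have h1 := sG_le_prSafe M q σ n h s
    have h2 := prSafe_le_prU_add M q r σ n h s
    have h3 := prU_le_sU M q r σ n h s
    linarith
  have := le_ciInf key
  unfold W sG at *
  linarith

lemma tendsto_W (σ : Strat M) (h : List S) (s : S) :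
    Filter.Tendsto
      (fun n => prU M q r σ n h s + prSafe M (fun t => q t ∧ ¬ r t) σ n h s)
      Filter.atTop (nhds (W M q r σ h s)) :=
  (tendsto_prU M q r σ h s).add (tendsto_prSafe M _ σ h s)

lemma W_one_of_sG_one (σ : Strat M) (h : List S) (s : S)
    (h1 : sG M q σ h s = 1) : 1 ≤ W M q r σ h s := h1 ▸ sG_le_W M q r σ h s

lemma W_step (σ : Strat M) (h : List S) (s : S) (hq : q s) (hr : ¬ r s) :
    W M q r σ h s = ∑ t, nextD M σ h s t * W M q r σ (s :: h) t := by
  have hF : ∀ n, prU M q r σ (n+1) h s + prSafe M (fun t => q t ∧ ¬ r t) σ (n+1) h s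
      = ∑ t, nextD M σ h s t *
          (prU M q r σ n (s :: h) t + prSafe M (fun t => q t ∧ ¬ r t) σ n (s :: h) t) := by
    intro n
    rw [prU, prSafe]
    simp only [hq, hr, if_true, if_false, not_false_iff, and_self, and_true, true_and]
    rw [← Finset.sum_add_distrib]
    exact Finset.sum_congr rfl fun t _ => (mul_add _ _ _).symm
  have t1 : Filter.Tendsto
      (fun n => prU M q r σ (n+1) h s + prSafe M (fun t => q t ∧ ¬ r t) σ (n+1) h s)
      Filter.atTop (nhds (W M q r σ h s)) :=
    (tendsto_W M q r σ h s).comp (Filter.tendsto_add_atTop_nat 1)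
  have t2 : Filter.Tendsto
      (fun n => ∑ t, nextD M σ h s t *
        (prU M q r σ n (s :: h) t + prSafe M (fun t => q t ∧ ¬ r t) σ n (s :: h) t))
      Filter.atTop (nhds (∑ t, nextD M σ h s t * W M q r σ (s :: h) t)) := by
    refine tendsto_finset_sum _ fun t _ => ?_
    exact (tendsto_W M q r σ (s :: h) t).const_mul _
  have t1' : Filter.Tendsto
      (fun n => ∑ t, nextD M σ h s t *
        (prU M q r σ n (s :: h) t + prSafe M (fun t => q t ∧ ¬ r t) σ n (s :: h) t))
      Filter.atTop (nhds (W M q r σ h s)) := by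
    refine t1.congr fun n => ?_
    exact hF n
  exact tendsto_nhds_unique t1' t2

lemma W_ge_one_of_r (σ : Strat M) (h : List S) (s : S) (hr : r s) :
    1 ≤ W M q r σ h s := by
  have h1 : prU M q r σ 0 h s = 1 := by rw [prU, if_pos hr]
  have := prU_le_sU M q r σ 0 h s
  have := sG_nonneg M (fun t => q t ∧ ¬ r t) σ h s
  unfold W
  linarith

end WLem
section StratCons
variable {S A : Type} [Fintype S]
set_option linter.unusedSectionVars false

open Classical in
/-- first element satisfying `p` together with the remainder after it. -/
noncomputable def firstSplit (p : S → Prop) : List S → Option (S × List S)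
  | [] => none
  | x :: xs => if p x then some (x, xs) else firstSplit p xs

lemma firstSplit_none (p : S → Prop) : ∀ l : List S, (∀ y ∈ l, ¬ p y) →
    firstSplit p l = none := by
  intro l
  induction l with
  | nil => intro _; rfl
  | cons x xs ih =>
    intro hfree
    rw [firstSplit, if_neg (hfree x (List.mem_cons_self))]
    exact ih fun y hy => hfree y (List.mem_cons_of_mem x hy)

lemma firstSplit_app (p : S → Prop) : ∀ (l1 : List S) (x : S) (l2 : List S),
    (∀ y ∈ l1, ¬ p y) → p x → firstSplit p (l1 ++ x :: l2) = some (x, l2) := by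
  intro l1
  induction l1 with
  | nil => intro x l2 _ hx; rw [List.nil_append, firstSplit, if_pos hx]
  | cons a as ih =>
    intro x l2 hfree hx
    rw [List.cons_append, firstSplit, if_neg (hfree a (List.mem_cons_self))]
    exact ih x l2 (fun y hy => hfree y (List.mem_cons_of_mem a hy)) hx

variable (M : MDP S A)

/-- strategy that follows `σ` until the first `p`-state `t` is visited, then follows `χ t`
(replaying the post-switch history). -/
noncomputable def switchStrat (σ : Strat M) (χ : S → Strat M) (p : S → Prop) : Strat M where
  act s h :=
    match firstSplit p h.reverse with
    | some (t, m) => (χ t).act s (m.reverse ++ [t])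
    | none => if p s then (χ s).act s [] else σ.act s h
  mem s h := by
    rcases hfs : firstSplit p h.reverse with _ | ⟨t, m⟩
    · simp only [hfs]
      split
      · exact (χ s).mem s []
      · exact σ.mem s h
    · simp only [hfs]
      exact (χ t).mem s _

lemma switchStrat_agree (σ : Strat M) (χ : S → Strat M) (p : S → Prop)
    (h : List S) (s : S) (hfree : ∀ y ∈ h, ¬ p y) (hs : ¬ p s) :
    (switchStrat M σ χ p).act s h = σ.act s h := by
  have h1 : firstSplit p h.reverse = none :=
    firstSplit_none p _ fun y hy => hfree y (List.mem_reverse.mp hy)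
  show (match firstSplit p h.reverse with
    | some (t, m) => (χ t).act s (m.reverse ++ [t])
    | none => if p s then (χ s).act s [] else σ.act s h) = σ.act s h
  rw [h1, if_neg hs]

/-- after switching at `t` with pre-history `h0` (p-free), the switch strategy replays `χ t`. -/
lemma switchStrat_post (σ : Strat M) (χ : S → Strat M) (p : S → Prop)
    (h0 : List S) (hfree : ∀ y ∈ h0, ¬ p y) (t : S) (hpt : p t)
    (h : List S) (s : S) (hInv : (h = [] ∧ s = t) ∨ (∃ m, h = m ++ [t])) :
    (switchStrat M σ χ p).act s (h ++ h0) = (χ t).act s h := by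
  have h0free : ∀ y ∈ h0.reverse, ¬ p y := fun y hy => hfree y (List.mem_reverse.mp hy)
  rcases hInv with ⟨rfl, rfl⟩ | ⟨m, rfl⟩
  · show (match firstSplit p h0.reverse with
      | some (t', m) => (χ t').act s (m.reverse ++ [t'])
      | none => if p s then (χ s).act s [] else σ.act s h0) = (χ s).act s []
    rw [firstSplit_none p _ h0free, if_pos hpt]
  · have hrev : ((m ++ [t]) ++ h0).reverse = h0.reverse ++ t :: m.reverse := by
      simp
    show (match firstSplit p (((m ++ [t]) ++ h0).reverse) with
      | some (t', m') => (χ t').act s (m'.reverse ++ [t'])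
      | none => if p s then (χ s).act s [] else σ.act s _) = (χ t).act s (m ++ [t])
    rw [hrev, firstSplit_app p _ _ _ h0free hpt]
    simp

/-- one-step prefix strategy: start at `u0` taking `a0`, then follow `σv`. -/
noncomputable def compStrat (σd σv : Strat M) (u0 : S) (a0 : A) (ha0 : a0 ∈ M.Av u0) :
    Strat M where
  act s h :=
    if h.getLast? = some u0 then σv.act s h.dropLast
    else if hs : s = u0 then a0 else σd.act s h
  mem s h := by
    split
    · exact σv.mem s _
    · split
      · next hs => exact hs ▸ ha0
      · exact σd.mem s h

lemma compStrat_root (σd σv : Strat M) (u0 : S) (a0 : A) (ha0 : a0 ∈ M.Av u0) :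
    (compStrat M σd σv u0 a0 ha0).act u0 [] = a0 := by
  unfold compStrat
  simp

lemma compStrat_post (σd σv : Strat M) (u0 : S) (a0 : A) (ha0 : a0 ∈ M.Av u0)
    (h : List S) (s : S) :
    (compStrat M σd σv u0 a0 ha0).act s (h ++ [u0]) = σv.act s h := by
  unfold compStrat
  simp only
  rw [if_pos (by simp)]
  congr 1
  simp

end StratCons
section Backward
variable {S A : Type} [Fintype S] (M : MDP S A) (q r : S → Prop)

lemma W_switch (σ : Strat M) (χ : S → Strat M)
    (hχ : ∀ t, AlmostGlob M q t → PrGlob M q (χ t) t = 1)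
    (h0 : List S) (hfree : ∀ y ∈ h0, ¬ AlmostGlob M q y) (t : S)
    (hpt : AlmostGlob M q t) :
    1 ≤ W M q r (switchStrat M σ χ (AlmostGlob M q)) h0 t := by
  set σs := switchStrat M σ χ (AlmostGlob M q) with hσs
  set Inv : List S → S → Prop :=
    fun h s => (h = [] ∧ s = t) ∨ (∃ m, h = m ++ [t]) with hInvDef
  have Hclosed : ∀ h s, Inv h s → ∀ t', Inv (s :: h) t' := by
    rintro h s (⟨rfl, rfl⟩ | ⟨m, rfl⟩) t'
    · exact Or.inr ⟨[], rfl⟩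
    · exact Or.inr ⟨s :: m, rfl⟩
  have Hact : ∀ h s, Inv h s → σs.act s (h ++ h0) = (χ t).act s h :=
    fun h s hInv => switchStrat_post M σ χ (AlmostGlob M q) h0 hfree t hpt h s hInv
  have eU : ∀ n, prU M q r σs n h0 t = prU M q r (χ t) n [] t := by
    intro n
    have := runEquiv_prU M σs (χ t) h0 Inv Hclosed Hact q r n [] t (Or.inl ⟨rfl, rfl⟩)
    simpa using this
  have eS : ∀ n, prSafe M (fun u => q u ∧ ¬ r u) σs n h0 t
      = prSafe M (fun u => q u ∧ ¬ r u) (χ t) n [] t := by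
    intro n
    have := runEquiv_prSafe M σs (χ t) h0 Inv Hclosed Hact
      (fun u => q u ∧ ¬ r u) n [] t (Or.inl ⟨rfl, rfl⟩)
    simpa using this
  have hWeq : W M q r σs h0 t = W M q r (χ t) [] t := by
    unfold W sU sG
    rw [iSup_congr eU, iInf_congr eS]
  rw [hWeq]
  exact W_one_of_sG_one M q r (χ t) [] t (hχ t hpt)

lemma key_backward (σ : Strat M) (χ : S → Strat M)
    (hχ : ∀ t, AlmostGlob M q t → PrGlob M q (χ t) t = 1) :
    ∀ n h s, (∀ y ∈ h, ¬ AlmostGlob M q y) →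
      prU M q (AlmostGlob M q) σ n h s ≤
        W M q r (switchStrat M σ χ (AlmostGlob M q)) h s := by
  set ψ := AlmostGlob M q with hψ
  set σs := switchStrat M σ χ ψ with hσs
  intro n
  induction n with
  | zero =>
    intro h s hfree
    rw [prU]
    by_cases hps : ψ s
    · rw [if_pos hps]
      exact W_switch M q r σ χ hχ h hfree s hps
    · rw [if_neg hps]
      exact W_nonneg M q r σs h s
  | succ n ih =>
    intro h s hfree
    rw [prU]
    by_cases hps : ψ s
    · rw [if_pos hps]
      exact W_switch M q r σ χ hχ h hfree s hps
    · rw [if_neg hps]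
      by_cases hq : q s
      · rw [if_pos hq]
        by_cases hr : r s
        · calc ∑ u, nextD M σ h s u * prU M q ψ σ n (s :: h) u
              ≤ ∑ u, nextD M σ h s u * 1 := Finset.sum_le_sum fun u _ =>
                mul_le_mul_of_nonneg_left (prU_le_one M q ψ σ n (s :: h) u)
                  (nextD_nonneg M σ h s u)
            _ = 1 := by simp [nextD_sum M σ h s]
            _ ≤ W M q r σs h s := W_ge_one_of_r M q r σs h s hr
        · have hstep := W_step M q r σs h s hq hr
          have hagree : σs.act s h = σ.act s h :=
            switchStrat_agree M σ χ ψ h s hfree hps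
          have hnd : ∀ u, nextD M σs h s u = nextD M σ h s u := by
            intro u; unfold nextD; rw [hagree]
          have hfree' : ∀ y ∈ s :: h, ¬ ψ y := by
            intro y hy
            rcases List.mem_cons.mp hy with rfl | hy'
            · exact hps
            · exact hfree y hy'
          rw [hstep]
          refine Finset.sum_le_sum fun u _ => ?_
          rw [hnd u]
          exact mul_le_mul_of_nonneg_left (ih (s :: h) u hfree')
            (nextD_nonneg M σ h s u)
      · rw [if_neg hq]
        exact W_nonneg M q r σs h s

lemma backward_until_almost (s : S)
    (hpos : PositiveUntil M q (AlmostGlob M q) s) : PositiveWeakUntil M q r s := by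
  obtain ⟨σ, hσ⟩ := hpos
  have hχ : ∃ χ : S → Strat M, ∀ t, AlmostGlob M q t → PrGlob M q (χ t) t = 1 := by
    refine ⟨fun t => if h : AlmostGlob M q t then h.choose else σ, fun t ht => ?_⟩
    simp only [dif_pos ht]
    exact ht.choose_spec
  obtain ⟨χ, hχ⟩ := hχ
  obtain ⟨n, hn⟩ := (sU_pos_iff M q (AlmostGlob M q) σ [] s).mp hσ
  refine ⟨switchStrat M σ χ (AlmostGlob M q), ?_⟩
  rw [PrWeakUntil_eq_W]
  exact lt_of_lt_of_le hn (key_backward M q r σ χ hχ n [] s (by simp))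

lemma backward_until (s : S)
    (hpos : PositiveUntil M q r s) : PositiveWeakUntil M q r s := by
  obtain ⟨σ, hσ⟩ := hpos
  refine ⟨σ, ?_⟩
  have := sG_nonneg M (fun t => q t ∧ ¬ r t) σ [] s
  have : PrWeakUntil M q r σ s = sU M q r σ [] s + sG M (fun t => q t ∧ ¬ r t) σ [] s := rfl
  have hσ' : (0:ℝ) < sU M q r σ [] s := hσ
  unfold PrWeakUntil
  have hG : (0:ℝ) ≤ PrGlob M (fun t => q t ∧ ¬ r t) σ s := sG_nonneg M _ σ [] s
  have hU : 0 < PrUntil M q r σ s := hσ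
  linarith

end Backward
section Bellman
variable {S A : Type} [Fintype S]

open Classical in
/-- step-bounded optimal safety value (value iteration for `□ q`). -/
noncomputable def wB (M : MDP S A) (q : S → Prop) : ℕ → S → ℝ
  | 0, u => if q u then 1 else 0
  | n+1, u =>
      if q u then
        (if hP : M.isP1 u then
          (M.Av u).sup' (M.avNe u hP) (fun a => wB M q n (M.δ1 u a))
        else ∑ v, M.δP u v * wB M q n v)
      else 0

variable (M : MDP S A) (q : S → Prop)

lemma wB_nonneg : ∀ n u, 0 ≤ wB M q n u := by
  intro n
  induction n with
  | zero => intro u; rw [wB]; split <;> norm_num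
  | succ n ih =>
    intro u
    rw [wB]
    split
    · split
      · next hP =>
        obtain ⟨a, ha⟩ := M.avNe u hP
        exact le_trans (ih (M.δ1 u a)) (Finset.le_sup' (fun a => wB M q n (M.δ1 u a)) ha)
      · exact Finset.sum_nonneg fun v _ => mul_nonneg (M.δP_nonneg u v) (ih v)
    · exact le_rfl

lemma wB_le_one : ∀ n u, wB M q n u ≤ 1 := by
  intro n
  induction n with
  | zero => intro u; rw [wB]; split <;> norm_num
  | succ n ih =>
    intro u
    rw [wB]
    split
    · split
      · next hP => exact Finset.sup'_le _ _ fun a _ => ih (M.δ1 u a)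
      · next hP =>
        calc ∑ v, M.δP u v * wB M q n v ≤ ∑ v, M.δP u v * 1 :=
              Finset.sum_le_sum fun v _ =>
                mul_le_mul_of_nonneg_left (ih v) (M.δP_nonneg u v)
          _ = 1 := by simp [M.δP_sum u hP]
    · norm_num

lemma wB_anti_succ : ∀ n u, wB M q (n+1) u ≤ wB M q n u := by
  intro n
  induction n with
  | zero =>
    intro u
    conv_rhs => rw [wB]
    rw [wB]
    split
    · split
      · next hP => exact Finset.sup'_le _ _ fun a _ => wB_le_one M q 0 (M.δ1 u a)
      · next hP =>
        calc ∑ v, M.δP u v * wB M q 0 v ≤ ∑ v, M.δP u v * 1 :=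
              Finset.sum_le_sum fun v _ =>
                mul_le_mul_of_nonneg_left (wB_le_one M q 0 v) (M.δP_nonneg u v)
          _ = 1 := by simp [M.δP_sum u hP]
    · exact le_rfl
  | succ n ih =>
    intro u
    conv_rhs => rw [wB]
    rw [wB]
    split
    · split
      · next hP =>
        exact Finset.sup'_le _ _ fun a ha =>
          le_trans (ih (M.δ1 u a)) (Finset.le_sup' (fun a => wB M q n (M.δ1 u a)) ha)
      · exact Finset.sum_le_sum fun v _ =>
          mul_le_mul_of_nonneg_left (ih v) (M.δP_nonneg u v)
    · exact le_rfl

lemma wB_anti : Antitone (fun n => wB M q n) := by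
  refine antitone_nat_of_succ_le fun n => ?_
  intro u
  exact wB_anti_succ M q n u

lemma wB_bdd (u : S) : BddBelow (Set.range fun n => wB M q n u) := by
  refine ⟨0, ?_⟩
  rintro x ⟨n, rfl⟩
  exact wB_nonneg M q n u

/-- optimal safety value. -/
noncomputable def winf (u : S) : ℝ := ⨅ n, wB M q n u

lemma winf_le (n : ℕ) (u : S) : winf M q u ≤ wB M q n u := ciInf_le (wB_bdd M q u) n

lemma winf_nonneg (u : S) : 0 ≤ winf M q u := le_ciInf fun n => wB_nonneg M q n u

lemma q_of_winf_pos (u : S) (h : 0 < winf M q u) : q u := by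
  by_contra hq
  have := winf_le M q 0 u
  rw [wB, if_neg hq] at this
  linarith

lemma tendsto_wB (u : S) :
    Filter.Tendsto (fun n => wB M q n u) Filter.atTop (nhds (winf M q u)) :=
  tendsto_atTop_ciInf (antitone_nat_of_succ_le fun n => wB_anti_succ M q n u)
    (wB_bdd M q u)

lemma prSafe_le_wB (σ : Strat M) : ∀ n h u, prSafe M q σ n h u ≤ wB M q n u := by
  intro n
  induction n with
  | zero => intro h u; rw [prSafe, wB]
  | succ n ih =>
    intro h u
    rw [prSafe, wB]
    split
    · by_cases hP : M.isP1 u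
      · rw [dif_pos hP]
        have hsum : ∑ t, nextD M σ h u t * prSafe M q σ n (u :: h) t
            = prSafe M q σ n (u :: h) (M.δ1 u (σ.act u h)) := by
          unfold nextD
          simp only [if_pos hP, ite_mul, one_mul, zero_mul]
          rw [Finset.sum_ite_eq' Finset.univ (M.δ1 u (σ.act u h))
            (fun t => prSafe M q σ n (u :: h) t)]
          simp
        rw [hsum]
        exact le_trans (ih (u :: h) (M.δ1 u (σ.act u h)))
          (Finset.le_sup' (fun a => wB M q n (M.δ1 u a)) (σ.mem u h))
      · rw [dif_neg hP]
        refine Finset.sum_le_sum fun v _ => ?_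
        unfold nextD
        rw [if_neg hP]
        exact mul_le_mul_of_nonneg_left (ih (u :: h) v) (M.δP_nonneg u v)
    · exact le_rfl

lemma sG_le_winf (σ : Strat M) (h : List S) (u : S) :
    sG M q σ h u ≤ winf M q u :=
  le_ciInf fun n => le_trans (sG_le_prSafe M q σ n h u) (prSafe_le_wB M q σ n h u)

/-- (b): at a P1 state with positive value some action preserves the value. -/
lemma exists_good_action (u : S) (hP : M.isP1 u) (hpos : 0 < winf M q u) :
    ∃ a ∈ M.Av u, winf M q u ≤ winf M q (M.δ1 u a) := by
  by_contra hc
  push_neg at hc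
  have hq : q u := q_of_winf_pos M q u hpos
  have hex : ∀ a : A, ∃ n, a ∈ M.Av u → wB M q n (M.δ1 u a) < winf M q u := by
    intro a
    by_cases ha : a ∈ M.Av u
    · have hlt := hc a ha
      have : ⨅ n, wB M q n (M.δ1 u a) < winf M q u := hlt
      obtain ⟨n, hn⟩ := exists_lt_of_ciInf_lt this
      exact ⟨n, fun _ => hn⟩
    · exact ⟨0, fun h => absurd h ha⟩
  choose f hf using hex
  set N := (M.Av u).sup f with hN
  have hall : ∀ a ∈ M.Av u, wB M q N (M.δ1 u a) < winf M q u := by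
    intro a ha
    have h1 : f a ≤ N := Finset.le_sup ha
    have h2 : wB M q N (M.δ1 u a) ≤ wB M q (f a) (M.δ1 u a) := by
      have := wB_anti M q h1
      exact this (M.δ1 u a)
    exact lt_of_le_of_lt h2 (hf a ha)
  have hle := winf_le M q (N+1) u
  rw [wB, if_pos hq, dif_pos hP] at hle
  have : (M.Av u).sup' (M.avNe u hP) (fun a => wB M q N (M.δ1 u a)) < winf M q u :=
    (Finset.sup'_lt_iff (M.avNe u hP)).mpr hall
  linarith

/-- (c): at a probabilistic state, if all successors have value ≤, they all have value ≥. -/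
lemma prob_succ_ge (u : S) (hP : ¬ M.isP1 u) (hpos : 0 < winf M q u)
    (hub : ∀ v, M.δP u v ≠ 0 → winf M q v ≤ winf M q u) :
    ∀ v, M.δP u v ≠ 0 → winf M q u ≤ winf M q v := by
  by_contra hcon
  push_neg at hcon
  obtain ⟨v0, hv0, hlt⟩ := hcon
  have hq : q u := q_of_winf_pos M q u hpos
  have key : winf M q u ≤ ∑ v, M.δP u v * winf M q v := by
    have t2 : Filter.Tendsto (fun n => ∑ v, M.δP u v * wB M q n v)
        Filter.atTop (nhds (∑ v, M.δP u v * winf M q v)) :=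
      tendsto_finset_sum _ fun v _ => (tendsto_wB M q v).const_mul _
    refine ge_of_tendsto t2 ?_
    refine Filter.Eventually.of_forall fun n => ?_
    have := winf_le M q (n+1) u
    rw [wB, if_pos hq, dif_neg hP] at this
    exact this
  have hstrict : ∑ v, M.δP u v * winf M q v < ∑ v, M.δP u v * winf M q u := by
    refine Finset.sum_lt_sum (fun v _ => ?_) ⟨v0, Finset.mem_univ v0, ?_⟩
    · by_cases hz : M.δP u v = 0
      · rw [hz]; norm_num
      · exact mul_le_mul_of_nonneg_left (hub v hz) (M.δP_nonneg u v)
    · have hδ : 0 < M.δP u v0 := lt_of_le_of_ne (M.δP_nonneg u v0) (Ne.symm hv0)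
      exact (mul_lt_mul_iff_right₀ hδ).mpr hlt
  have hsum : ∑ v, M.δP u v * winf M q u = winf M q u := by
    rw [← Finset.sum_mul, M.δP_sum u hP, one_mul]
  rw [hsum] at hstrict
  linarith

/-- a `q`-closed invariant set yields safety probability 1. -/
lemma prSafe_eq_one_of_closed (F : Set S) (τ : Strat M)
    (hqF : ∀ u ∈ F, q u)
    (hstep1 : ∀ u ∈ F, ∀ h, M.isP1 u → M.δ1 u (τ.act u h) ∈ F)
    (hstep2 : ∀ u ∈ F, ¬ M.isP1 u → ∀ v, M.δP u v ≠ 0 → v ∈ F) :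
    ∀ n h u, u ∈ F → prSafe M q τ n h u = 1 := by
  intro n
  induction n with
  | zero => intro h u hu; rw [prSafe, if_pos (hqF u hu)]
  | succ n ih =>
    intro h u hu
    rw [prSafe, if_pos (hqF u hu)]
    by_cases hP : M.isP1 u
    · have hsum : ∑ t, nextD M τ h u t * prSafe M q τ n (u :: h) t
          = prSafe M q τ n (u :: h) (M.δ1 u (τ.act u h)) := by
        unfold nextD
        simp only [if_pos hP, ite_mul, one_mul, zero_mul]
        rw [Finset.sum_ite_eq' Finset.univ (M.δ1 u (τ.act u h))
          (fun t => prSafe M q τ n (u :: h) t)]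
        simp
      rw [hsum]
      exact ih (u :: h) _ (hstep1 u hu h hP)
    · have hsum : ∑ t, nextD M τ h u t * prSafe M q τ n (u :: h) t
          = ∑ t, M.δP u t := by
        refine Finset.sum_congr rfl fun v _ => ?_
        unfold nextD
        rw [if_neg hP]
        by_cases hz : M.δP u v = 0
        · rw [hz]; ring
        · rw [ih (u :: h) v (hstep2 u hu hP v hz), mul_one]
      rw [hsum, M.δP_sum u hP]

end Bellman
section PosStep
variable {S A : Type} [Fintype S] (M : MDP S A) (q ρ : S → Prop)

lemma prU_comp (σd σv : Strat M) (u0 : S) (a0 : A) (ha0 : a0 ∈ M.Av u0) :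
    ∀ n h s, prU M q ρ (compStrat M σd σv u0 a0 ha0) n (h ++ [u0]) s
      = prU M q ρ σv n h s := by
  intro n h s
  exact runEquiv_prU M (compStrat M σd σv u0 a0 ha0) σv [u0] (fun _ _ => True)
    (fun _ _ _ _ => trivial)
    (fun h s _ => compStrat_post M σd σv u0 a0 ha0 h s) q ρ n h s trivial

lemma PositiveUntil_of_target (u : S) (hρ : ρ u) (σ : Strat M) :
    PositiveUntil M q ρ u := by
  refine ⟨σ, ?_⟩
  have h0 : prU M q ρ σ 0 [] u = 1 := by rw [prU, if_pos hρ]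
  have := prU_le_sU M q ρ σ 0 [] u
  have : (0:ℝ) < sU M q ρ σ [] u := by rw [h0] at this; linarith
  exact this

lemma pos_step_P1 (u0 : S) (hq : q u0) (hP : M.isP1 u0) (a0 : A) (ha0 : a0 ∈ M.Av u0)
    (hv : PositiveUntil M q ρ (M.δ1 u0 a0)) : PositiveUntil M q ρ u0 := by
  obtain ⟨σv, hσv⟩ := hv
  by_cases hρ : ρ u0
  · exact PositiveUntil_of_target M q ρ u0 hρ σv
  obtain ⟨n, hn⟩ := (sU_pos_iff M q ρ σv [] _).mp hσv
  set σ' := compStrat M σv σv u0 a0 ha0 with hσ'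
  refine ⟨σ', ?_⟩
  rw [show PrUntil M q ρ σ' u0 = sU M q ρ σ' [] u0 from rfl, sU_pos_iff]
  refine ⟨n + 1, ?_⟩
  rw [prU, if_neg hρ, if_pos hq]
  have hact : σ'.act u0 [] = a0 := compStrat_root M σv σv u0 a0 ha0
  have hsum : ∑ t, nextD M σ' [] u0 t * prU M q ρ σ' n [u0] t
      = prU M q ρ σ' n [u0] (M.δ1 u0 a0) := by
    unfold nextD
    simp only [if_pos hP, hact, ite_mul, one_mul, zero_mul]
    rw [Finset.sum_ite_eq' Finset.univ (M.δ1 u0 a0) (fun t => prU M q ρ σ' n [u0] t)]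
    simp
  rw [hsum]
  have : prU M q ρ σ' n ([] ++ [u0]) (M.δ1 u0 a0) = prU M q ρ σv n [] (M.δ1 u0 a0) :=
    prU_comp M q ρ σv σv u0 a0 ha0 n [] _
  simpa using this ▸ hn

lemma pos_step_prob (u0 : S) (hq : q u0) (hP : ¬ M.isP1 u0) (v : S)
    (hδ : M.δP u0 v ≠ 0) (hv : PositiveUntil M q ρ v) : PositiveUntil M q ρ u0 := by
  obtain ⟨σv, hσv⟩ := hv
  by_cases hρ : ρ u0
  · exact PositiveUntil_of_target M q ρ u0 hρ σv
  obtain ⟨n, hn⟩ := (sU_pos_iff M q ρ σv [] _).mp hσv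
  set σ' := compStrat M σv σv u0 (σv.act u0 []) (σv.mem u0 []) with hσ'
  refine ⟨σ', ?_⟩
  rw [show PrUntil M q ρ σ' u0 = sU M q ρ σ' [] u0 from rfl, sU_pos_iff]
  refine ⟨n + 1, ?_⟩
  rw [prU, if_neg hρ, if_pos hq]
  have hterm : 0 < nextD M σ' [] u0 v * prU M q ρ σ' n [u0] v := by
    have h1 : nextD M σ' [] u0 v = M.δP u0 v := by unfold nextD; rw [if_neg hP]
    have h2 : prU M q ρ σ' n [u0] v = prU M q ρ σv n [] v := by
      have := prU_comp M q ρ σv σv u0 (σv.act u0 []) (σv.mem u0 []) n [] v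
      simpa using this
    rw [h1, h2]
    exact mul_pos (lt_of_le_of_ne (M.δP_nonneg u0 v) (Ne.symm hδ)) hn
  calc (0:ℝ) < nextD M σ' [] u0 v * prU M q ρ σ' n [u0] v := hterm
    _ ≤ ∑ t, nextD M σ' [] u0 t * prU M q ρ σ' n [u0] t := by
        exact Finset.single_le_sum
          (f := fun t => nextD M σ' [] u0 t * prU M q ρ σ' n [u0] t)
          (fun t _ => mul_nonneg (nextD_nonneg M σ' [] u0 t)
            (prU_nonneg M q ρ σ' n [u0] t)) (Finset.mem_univ v)

end PosStep
section Forward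
variable {S A : Type} [Fintype S] (M : MDP S A) (q : S → Prop)

open Classical in
lemma positiveUntil_of_winf_pos (σd : Strat M) :
    ∀ s : S, 0 < winf M q s → PositiveUntil M q (AlmostGlob M q) s := by
  set ψ := AlmostGlob M q with hψdef
  by_contra hcon
  push_neg at hcon
  obtain ⟨s0, hs0pos, hs0⟩ := hcon
  set Bf : Finset S :=
    Finset.univ.filter (fun u => 0 < winf M q u ∧ ¬ PositiveUntil M q ψ u) with hBf
  have hs0mem : s0 ∈ Bf := by
    rw [hBf, Finset.mem_filter]
    exact ⟨Finset.mem_univ s0, hs0pos, hs0⟩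
  have hBne : Bf.Nonempty := ⟨s0, hs0mem⟩
  set m : ℝ := Bf.sup' hBne (winf M q) with hm
  have memBf : ∀ u, u ∈ Bf ↔ (0 < winf M q u ∧ ¬ PositiveUntil M q ψ u) := by
    intro u
    rw [hBf, Finset.mem_filter]
    simp
  -- the invariant set
  set F : Set S := {u | u ∈ Bf ∧ winf M q u = m} with hF
  obtain ⟨u0, hu0mem, hu0eq⟩ := Finset.exists_mem_eq_sup' hBne (winf M q)
  have hu0F : u0 ∈ F := ⟨hu0mem, hu0eq.symm⟩
  have hmpos : 0 < m := by
    rw [hm, hu0eq]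
    exact ((memBf u0).mp hu0mem).1
  have hFprop : ∀ u ∈ F, 0 < winf M q u ∧ ¬ PositiveUntil M q ψ u ∧ q u := by
    rintro u ⟨huB, huw⟩
    obtain ⟨h1, h2⟩ := (memBf u).mp huB
    exact ⟨h1, h2, q_of_winf_pos M q u h1⟩
  -- any one-step successor that is PositiveUntil would propagate back; so successors stay in F
  have hclosed1 : ∀ u ∈ F, M.isP1 u → ∃ a ∈ M.Av u, M.δ1 u a ∈ F := by
    rintro u huF hP
    obtain ⟨hupos, hunot, huq⟩ := hFprop u huF
    obtain ⟨a, ha, hge⟩ := exists_good_action M q u hP hupos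
    set v := M.δ1 u a with hv
    have hvnot : ¬ PositiveUntil M q ψ v := by
      intro hvp
      exact hunot (pos_step_P1 M q ψ u huq hP a ha hvp)
    have hvpos : 0 < winf M q v := lt_of_lt_of_le (huF.2 ▸ hupos) hge
    have hvB : v ∈ Bf := (memBf v).mpr ⟨hvpos, hvnot⟩
    have hvle : winf M q v ≤ m := Finset.le_sup' (winf M q) hvB
    have hveq : winf M q v = m := le_antisymm hvle (huF.2 ▸ hge)
    exact ⟨a, ha, hvB, hveq⟩
  have hclosed2 : ∀ u ∈ F, ¬ M.isP1 u → ∀ v, M.δP u v ≠ 0 → v ∈ F := by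
    rintro u huF hP
    obtain ⟨hupos, hunot, huq⟩ := hFprop u huF
    have hnotv : ∀ v, M.δP u v ≠ 0 → ¬ PositiveUntil M q ψ v := by
      intro v hδ hvp
      exact hunot (pos_step_prob M q ψ u huq hP v hδ hvp)
    have hub : ∀ v, M.δP u v ≠ 0 → winf M q v ≤ winf M q u := by
      intro v hδ
      by_cases hvpos : 0 < winf M q v
      · have hvB : v ∈ Bf := (memBf v).mpr ⟨hvpos, hnotv v hδ⟩
        calc winf M q v ≤ m := Finset.le_sup' (winf M q) hvB
          _ = winf M q u := huF.2.symm
      · push_neg at hvpos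
        exact le_trans hvpos (le_of_lt hupos)
    have hge := prob_succ_ge M q u hP hupos hub
    intro v hδ
    have hveq : winf M q v = winf M q u := le_antisymm (hub v hδ) (hge v hδ)
    have hvpos : 0 < winf M q v := hveq ▸ hupos
    have hvB : v ∈ Bf := (memBf v).mpr ⟨hvpos, hnotv v hδ⟩
    exact ⟨hvB, hveq.trans huF.2⟩
  -- memoryless strategy staying inside F
  have hch : ∀ u : S, ∃ a, a ∈ M.Av u ∧ (M.isP1 u → u ∈ F → M.δ1 u a ∈ F) := by
    intro u
    by_cases hc : M.isP1 u ∧ u ∈ F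
    · obtain ⟨a, ha, haF⟩ := hclosed1 u hc.2 hc.1
      exact ⟨a, ha, fun _ _ => haF⟩
    · refine ⟨σd.act u [], σd.mem u [], fun h1 h2 => absurd ⟨h1, h2⟩ hc⟩
  choose g hg1 hg2 using hch
  set τ : Strat M := ⟨fun u _ => g u, fun u h => hg1 u⟩ with hτ
  have hone : ∀ n h u, u ∈ F → prSafe M q τ n h u = 1 := by
    refine prSafe_eq_one_of_closed M q F τ (fun u hu => (hFprop u hu).2.2) ?_ ?_
    · intro u hu h hP
      exact hg2 u hP hu
    · intro u hu hP v hδ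
      exact hclosed2 u hu hP v hδ
  -- hence u0 satisfies AlmostGlob q, contradiction with u0 ∈ Bf
  have hAG : ψ u0 := by
    refine ⟨τ, ?_⟩
    show (⨅ n, prSafe M q τ n [] u0) = 1
    have : ∀ n, prSafe M q τ n [] u0 = 1 := fun n => hone n [] u0 hu0F
    simp [this]
  exact ((memBf u0).mp hu0mem).2 (PositiveUntil_of_target M q ψ u0 hAG σd)

end Forward
/-- `⟦⟨Positive⟩(q W r)⟧ = ⟦⟨Positive⟩(q U r)⟧ ∪ ⟦⟨Positive⟩(q U ⟨Almost⟩(□ q))⟧`. -/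
theorem positive_weak_until_characterization
    (M : MDP S A) (q r : S → Prop) :
    {s : S | PositiveWeakUntil M q r s} =
      {s : S | PositiveUntil M q r s} ∪
      {s : S | PositiveUntil M q (AlmostGlob M q) s} := by
  ext s
  simp only [Set.mem_setOf_eq, Set.mem_union]
  constructor
  · rintro ⟨σ, hσ⟩
    by_cases hU : 0 < PrUntil M q r σ s
    · exact Or.inl ⟨σ, hU⟩
    · right
      push_neg at hU
      have hG : 0 < PrGlob M (fun t => q t ∧ ¬ r t) σ s := by
        unfold PrWeakUntil at hσ
        linarith
      have h1 : PrGlob M (fun t => q t ∧ ¬ r t) σ s ≤ sG M q σ [] s := by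
        refine le_ciInf fun n => ?_
        refine le_trans (sG_le_prSafe M (fun t => q t ∧ ¬ r t) σ n [] s) ?_
        exact prSafe_mono_pred M (fun t => q t ∧ ¬ r t) q (fun t ht => ht.1) σ n [] s
      have h2 : sG M q σ [] s ≤ winf M q s := sG_le_winf M q σ [] s
      exact positiveUntil_of_winf_pos M q σ s (by linarith)
  · rintro (h | h)
    · exact backward_until M q r s h
    · exact backward_until_almost M q r s h
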